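/- (Classical correlations are independent of the purification) Let S, R, A be nonempty finite types, let ψ, φ ∈ ℂ^{S×R×A} be unit vectors such that tr_A |ψ⟩⟨ψ| = tr_A |φ⟩⟨φ|, and let 1 ≤ d ≤ |S|. Then C^(d)_{S|A}(tr_R |ψ⟩⟨ψ|) = C^(d)_{S|A}(tr_R |φ⟩⟨φ|). -/

import Mathlib

open Matrix
open scoped ComplexOrder Kronecker Classical

/-- Sum of the `d` largest eigenvalues (with multiplicity, decreasing order)
of a Hermitian matrix. -/
noncomputable def sumTopEigs {n : Type*} [Fintype n] [DecidableEq n]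
    {A : Matrix n n ℂ} (hA : A.IsHermitian) (d : ℕ) : ℝ :=
  ((((Finset.univ.val.map hA.eigenvalues).sort (· ≤ ·)).reverse.take d)).sum

/-- `ε^(d)(A) = 1 - Σ_{i=1}^d λ_i^↓(A)` for Hermitian `A` (junk value `0` otherwise). -/
noncomputable def epsD {n : Type*} [Fintype n] [DecidableEq n]
    (A : Matrix n n ℂ) (d : ℕ) : ℝ :=
  if h : A.IsHermitian then 1 - sumTopEigs h d else 0

/-- `|ψ⟩⟨ψ|`. -/
noncomputable def outer {n : Type*} (ψ : n → ℂ) : Matrix n n ℂ :=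
  fun i j => ψ i * star (ψ j)

/-- Partial trace over the second tensor factor. -/
noncomputable def ptraceR {S R : Type*} [Fintype R] (M : Matrix (S × R) (S × R) ℂ) :
    Matrix S S ℂ :=
  fun s s' => ∑ r, M (s, r) (s', r)

/-- Partial trace over the third tensor factor. -/
noncomputable def ptrace3 {S R A : Type*} [Fintype A] (M : Matrix (S × R × A) (S × R × A) ℂ) :
    Matrix (S × R) (S × R) ℂ :=
  fun p q => ∑ a, M (p.1, p.2, a) (q.1, q.2, a)

/-- Partial trace over the second (middle) tensor factor. -/
noncomputable def ptrace2 {S R A : Type*} [Fintype R] (M : Matrix (S × R × A) (S × R × A) ℂ) :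
    Matrix (S × A) (S × A) ℂ :=
  fun p q => ∑ r, M (p.1, r, p.2) (q.1, r, q.2)

/-- Partial trace over the second and third tensor factors. -/
noncomputable def ptrace23 {S R A : Type*} [Fintype R] [Fintype A]
    (M : Matrix (S × R × A) (S × R × A) ℂ) : Matrix S S ℂ :=
  fun s s' => ∑ r, ∑ a, M (s, r, a) (s', r, a)

/-- Convex-roof extension `E^(d)_{S|R}`: the infimum over all finite pure-state
convex decompositions `ρ = Σ_k p_k |ψ_k⟩⟨ψ_k|` of `Σ_k p_k ε^(d)(tr_R |ψ_k⟩⟨ψ_k|)`. -/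
noncomputable def convRoofE {S R : Type*} [Fintype S] [Fintype R] [DecidableEq S]
    (d : ℕ) (ρ : Matrix (S × R) (S × R) ℂ) : ℝ :=
  sInf { e : ℝ | ∃ (m : ℕ) (p : Fin m → ℝ) (ψ : Fin m → (S × R → ℂ)),
    (∀ k, 0 ≤ p k) ∧ (∑ k, p k = 1) ∧
    (∀ k, star (ψ k) ⬝ᵥ ψ k = 1) ∧
    (ρ = ∑ k, (p k : ℂ) • outer (ψ k)) ∧
    e = ∑ k, p k * epsD (ptraceR (outer (ψ k))) d }

/-- Classical correlations `C^(d)_{S|A}`: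
`ε^(d)(tr_A ρ)` minus the infimum over all POVMs `{M_x}` on `A` of
`Σ_x p_x ε^(d)(p_x⁻¹ tr_A((1_S ⊗ M_x) ρ))`, where `p_x = tr((1_S ⊗ M_x) ρ)`
and terms with `p_x = 0` are omitted. -/
noncomputable def classC {S A : Type*} [Fintype S] [Fintype A] [DecidableEq S] [DecidableEq A]
    (d : ℕ) (ρ : Matrix (S × A) (S × A) ℂ) : ℝ :=
  epsD (ptraceR ρ) d -
  sInf { e : ℝ | ∃ (m : ℕ) (M : Fin m → Matrix A A ℂ),
    (∀ x, (M x).PosSemidef) ∧ (∑ x, M x = 1) ∧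
    e = ∑ x,
      (if (((1 : Matrix S S ℂ) ⊗ₖ M x) * ρ).trace = 0 then 0
       else ((((1 : Matrix S S ℂ) ⊗ₖ M x) * ρ).trace).re *
         epsD (((((1 : Matrix S S ℂ) ⊗ₖ M x) * ρ).trace)⁻¹ •
           ptraceR (((1 : Matrix S S ℂ) ⊗ₖ M x) * ρ)) d) }


lemma exists_unitary_of_gram {n A : Type*} [Fintype n] [Fintype A] [DecidableEq A]
    (Ψ Φ : Matrix n A ℂ) (h : Ψ * Ψᴴ = Φ * Φᴴ) :
    ∃ U : Matrix A A ℂ, Uᴴ * U = 1 ∧ U * Uᴴ = 1 ∧ Φ = Ψ * U := by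
  classical
  set V := EuclideanSpace ℂ A with hV
  let e : V ≃ₗ[ℂ] (A → ℂ) := WithLp.linearEquiv 2 ℂ (A → ℂ)
  have he : ∀ (v : A → ℂ) (i : A), (e.symm v : A → ℂ) i = v i := fun v i => rfl
  let K₁ : (n → ℂ) →ₗ[ℂ] V := e.symm.toLinearMap ∘ₗ (Ψᴴ).mulVecLin
  let K₂ : (n → ℂ) →ₗ[ℂ] V := e.symm.toLinearMap ∘ₗ (Φᴴ).mulVecLin
  have inner_eq : ∀ (M : Matrix n A ℂ) (y : n → ℂ),
      (inner ℂ (e.symm (Mᴴ *ᵥ y)) (e.symm (Mᴴ *ᵥ y)) : ℂ) = star y ⬝ᵥ ((M * Mᴴ) *ᵥ y) := by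
    intro M y
    rw [PiLp.inner_apply]
    simp only [he, RCLike.inner_apply]
    have : star y ⬝ᵥ ((M * Mᴴ) *ᵥ y) = star (Mᴴ *ᵥ y) ⬝ᵥ (Mᴴ *ᵥ y) := by
      rw [Matrix.star_mulVec, Matrix.conjTranspose_conjTranspose, ← Matrix.dotProduct_mulVec,
        Matrix.mulVec_mulVec]
    rw [this]
    simp [dotProduct, mul_comm]
  have norm_eq : ∀ y : n → ℂ, ‖K₁ y‖ = ‖K₂ y‖ := by
    intro y
    have h1 : (inner ℂ (K₁ y) (K₁ y) : ℂ) = inner ℂ (K₂ y) (K₂ y) := by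
      simp only [K₁, K₂, LinearMap.comp_apply, Matrix.mulVecLin_apply, LinearEquiv.coe_toLinearMap]
      rw [inner_eq, inner_eq, h]
    have h3 : ‖K₁ y‖^2 = ‖K₂ y‖^2 := by
      rw [← inner_self_eq_norm_sq (𝕜 := ℂ), ← inner_self_eq_norm_sq (𝕜 := ℂ), h1]
    exact (sq_eq_sq₀ (norm_nonneg _) (norm_nonneg _)).mp h3
  have hker : LinearMap.ker K₁ ≤ LinearMap.ker K₂ := by
    intro y hy
    rw [LinearMap.mem_ker] at hy ⊢
    have h2 := norm_eq y
    rw [hy, norm_zero] at h2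
    exact norm_eq_zero.mp h2.symm
  let L : LinearMap.range K₁ →ₗ[ℂ] V :=
    (Submodule.liftQ (LinearMap.ker K₁) K₂ hker) ∘ₗ K₁.quotKerEquivRange.symm.toLinearMap
  have hL : ∀ y : n → ℂ, L ⟨K₁ y, LinearMap.mem_range_self K₁ y⟩ = K₂ y := by
    intro y
    have h1 : K₁.quotKerEquivRange.symm ⟨K₁ y, LinearMap.mem_range_self K₁ y⟩
        = (LinearMap.ker K₁).mkQ y := LinearMap.quotKerEquivRange_symm_apply_image K₁ y _
    simp only [L, LinearMap.comp_apply, LinearEquiv.coe_toLinearMap, h1, Submodule.mkQ_apply,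
      Submodule.liftQ_apply]
  have hnorm : ∀ z : LinearMap.range K₁, ‖L z‖ = ‖z‖ := by
    rintro ⟨v, hv⟩
    obtain ⟨y, rfl⟩ := hv
    have : (⟨K₁ y, LinearMap.mem_range_self K₁ y⟩ : LinearMap.range K₁)
        = ⟨K₁ y, Exists.intro y rfl⟩ := rfl
    rw [← this, hL y, ← norm_eq y]
    rfl
  let Li : LinearMap.range K₁ →ₗᵢ[ℂ] V := ⟨L, hnorm⟩
  let W := Li.extend
  have hW : ∀ y : n → ℂ, W (K₁ y) = K₂ y := by
    intro y
    have := Li.extend_apply ⟨K₁ y, LinearMap.mem_range_self K₁ y⟩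
    exact this.trans (hL y)
  let T : (A → ℂ) →ₗ[ℂ] (A → ℂ) := e.toLinearMap ∘ₗ W.toLinearMap ∘ₗ e.symm.toLinearMap
  let U₀ := LinearMap.toMatrix' T
  have hU₀mul : ∀ v : A → ℂ, U₀ *ᵥ v = T v := by
    intro v
    rw [← Matrix.toLin'_apply, Matrix.toLin'_toMatrix']
  have hmv : ∀ y : n → ℂ, (U₀ * Ψᴴ) *ᵥ y = Φᴴ *ᵥ y := by
    intro y
    rw [← Matrix.mulVec_mulVec, hU₀mul]
    have h1 : T (Ψᴴ *ᵥ y) = e (W (K₁ y)) := rfl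
    rw [h1, hW y]
    exact funext fun i => rfl
  have hfact : Φᴴ = U₀ * Ψᴴ := by
    ext a m
    have := congrFun (hmv (Pi.single m 1)) a
    simpa [Matrix.mulVec_single] using this.symm
  have hU₀ : U₀ᴴ * U₀ = 1 := by
    ext a b
    have hcol : ∀ (c x : A), U₀ c x = (W (e.symm (Pi.single x 1)) : A → ℂ) c := by
      intro c x
      rw [show U₀ = LinearMap.toMatrix' T from rfl, LinearMap.toMatrix'_apply]
      have h0 : (fun j' => if j' = x then (1:ℂ) else 0) = Pi.single x 1 := by
        funext j'; simp [Pi.single_apply]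
      rfl
    simp only [Matrix.mul_apply, Matrix.conjTranspose_apply, hcol]
    have h2 : (∑ c, star ((W (e.symm (Pi.single a 1)) : A → ℂ) c) *
          (W (e.symm (Pi.single b 1)) : A → ℂ) c)
        = (inner ℂ (W (e.symm (Pi.single a 1))) (W (e.symm (Pi.single b 1))) : ℂ) := by
      rw [PiLp.inner_apply]
      simp only [RCLike.inner_apply]
      exact Finset.sum_congr rfl fun _ _ => mul_comm _ _
    rw [h2, W.inner_map_map, PiLp.inner_apply]
    simp only [he, RCLike.inner_apply, Matrix.one_apply]
    simp [Pi.single_apply, apply_ite (starRingEnd ℂ), eq_comm]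
  refine ⟨U₀ᴴ, ?_, ?_, ?_⟩
  · rw [Matrix.conjTranspose_conjTranspose]
    exact mul_eq_one_comm.mp hU₀
  · rw [Matrix.conjTranspose_conjTranspose]
    exact hU₀
  · calc Φ = (Φᴴ)ᴴ := (Matrix.conjTranspose_conjTranspose Φ).symm
      _ = (U₀ * Ψᴴ)ᴴ := by rw [hfact]
      _ = Ψ * U₀ᴴ := by rw [Matrix.conjTranspose_mul, Matrix.conjTranspose_conjTranspose]


lemma kron_mul_apply {S A : Type*} [Fintype S] [Fintype A] [DecidableEq S]
    (B : Matrix A A ℂ) (M : Matrix (S × A) (S × A) ℂ) (s : S) (a : A) (q : S × A) :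
    (((1 : Matrix S S ℂ) ⊗ₖ B) * M) (s, a) q = ∑ b, B a b * M (s, b) q := by
  rw [Matrix.mul_apply, Fintype.sum_prod_type]
  simp [Matrix.one_apply, ite_mul, Finset.sum_ite_eq, Matrix.kroneckerMap_apply]

lemma mul_kron_apply {S A : Type*} [Fintype S] [Fintype A] [DecidableEq S]
    (C : Matrix A A ℂ) (M : Matrix (S × A) (S × A) ℂ) (p : S × A) (s' : S) (a : A) :
    (M * ((1 : Matrix S S ℂ) ⊗ₖ C)) p (s', a) = ∑ c, M p (s', c) * C c a := by
  rw [Matrix.mul_apply, Fintype.sum_prod_type]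
  simp [Matrix.one_apply, mul_ite, mul_assoc, Finset.sum_ite_eq, Matrix.kroneckerMap_apply]

lemma ptraceR_sandwich {S A : Type*} [Fintype S] [Fintype A] [DecidableEq S] [DecidableEq A]
    (M : Matrix (S × A) (S × A) ℂ) (B C : Matrix A A ℂ) :
    ptraceR (((1 : Matrix S S ℂ) ⊗ₖ B) * M * ((1 : Matrix S S ℂ) ⊗ₖ C))
      = ptraceR (((1 : Matrix S S ℂ) ⊗ₖ (C * B)) * M) := by
  funext s s'
  show (∑ a, (((1 : Matrix S S ℂ) ⊗ₖ B) * M * ((1 : Matrix S S ℂ) ⊗ₖ C)) (s, a) (s', a))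
      = ∑ a, (((1 : Matrix S S ℂ) ⊗ₖ (C * B)) * M) (s, a) (s', a)
  have lhs : ∀ a, (((1 : Matrix S S ℂ) ⊗ₖ B) * M * ((1 : Matrix S S ℂ) ⊗ₖ C)) (s, a) (s', a)
      = ∑ c, ∑ b, B a b * M (s, b) (s', c) * C c a := by
    intro a
    rw [mul_kron_apply]
    refine Finset.sum_congr rfl fun c _ => ?_
    rw [kron_mul_apply, Finset.sum_mul]
  have rhs : ∀ a, (((1 : Matrix S S ℂ) ⊗ₖ (C * B)) * M) (s, a) (s', a)
      = ∑ b, (∑ c, C a c * B c b) * M (s, b) (s', a) := by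
    intro a
    rw [kron_mul_apply]
    refine Finset.sum_congr rfl fun b _ => ?_
    rw [Matrix.mul_apply]
  simp only [lhs, rhs, Finset.sum_mul]
  rw [Finset.sum_comm]
  refine Finset.sum_congr rfl fun c _ => ?_
  rw [Finset.sum_comm]
  refine Finset.sum_congr rfl fun b _ => ?_
  refine Finset.sum_congr rfl fun a _ => ?_
  ring

lemma trace_eq_trace_ptraceR {S A : Type*} [Fintype S] [Fintype A]
    (N : Matrix (S × A) (S × A) ℂ) : N.trace = (ptraceR N).trace := by
  rw [Matrix.trace, Matrix.trace, Fintype.sum_prod_type]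
  rfl


lemma one_kron_conjTranspose {S A : Type*} [Fintype S] [Fintype A] [DecidableEq S]
    (W : Matrix A A ℂ) : ((1 : Matrix S S ℂ) ⊗ₖ W)ᴴ = (1 : Matrix S S ℂ) ⊗ₖ Wᴴ := by
  funext p q
  cases p with | mk p1 p2 => cases q with | mk q1 q2 =>
  simp [Matrix.conjTranspose_apply, Matrix.kroneckerMap_apply, Matrix.one_apply,
    apply_ite (starRingEnd ℂ), eq_comm]

lemma classC_conj {S A : Type*} [Fintype S] [Fintype A] [DecidableEq S] [DecidableEq A]
    (d : ℕ) (ρ : Matrix (S × A) (S × A) ℂ) (W : Matrix A A ℂ)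
    (h1 : Wᴴ * W = 1) (h2 : W * Wᴴ = 1) :
    classC d (((1 : Matrix S S ℂ) ⊗ₖ W) * ρ * ((1 : Matrix S S ℂ) ⊗ₖ W)ᴴ) = classC d ρ := by
  have hkW := one_kron_conjTranspose (S := S) W
  set ρ' := ((1 : Matrix S S ℂ) ⊗ₖ W) * ρ * ((1 : Matrix S S ℂ) ⊗ₖ W)ᴴ with hρ'
  have key : ∀ Mx : Matrix A A ℂ,
      ((1 : Matrix S S ℂ) ⊗ₖ Mx) * ρ'
        = ((1 : Matrix S S ℂ) ⊗ₖ (Mx * W)) * ρ * ((1 : Matrix S S ℂ) ⊗ₖ Wᴴ) := by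
    intro Mx
    rw [hρ', hkW, ← Matrix.mul_assoc, ← Matrix.mul_assoc, ← Matrix.mul_kronecker_mul, one_mul]
  have keyPt : ∀ Mx : Matrix A A ℂ,
      ptraceR (((1 : Matrix S S ℂ) ⊗ₖ Mx) * ρ')
        = ptraceR (((1 : Matrix S S ℂ) ⊗ₖ (Wᴴ * Mx * W)) * ρ) := by
    intro Mx
    rw [key, ptraceR_sandwich, ← Matrix.mul_assoc]
  have keyTr : ∀ Mx : Matrix A A ℂ,
      (((1 : Matrix S S ℂ) ⊗ₖ Mx) * ρ').trace
        = (((1 : Matrix S S ℂ) ⊗ₖ (Wᴴ * Mx * W)) * ρ).trace := by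
    intro Mx
    rw [trace_eq_trace_ptraceR, trace_eq_trace_ptraceR, keyPt]
  have hWNW : ∀ N : Matrix A A ℂ, Wᴴ * (W * N * Wᴴ) * W = N := by
    intro N
    simp only [Matrix.mul_assoc]
    rw [h1, Matrix.mul_one, ← Matrix.mul_assoc, h1, Matrix.one_mul]
  have keyPt' : ∀ N : Matrix A A ℂ,
      ptraceR (((1 : Matrix S S ℂ) ⊗ₖ (W * N * Wᴴ)) * ρ')
        = ptraceR (((1 : Matrix S S ℂ) ⊗ₖ N) * ρ) := by
    intro N
    rw [keyPt, hWNW]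
  have keyTr' : ∀ N : Matrix A A ℂ,
      (((1 : Matrix S S ℂ) ⊗ₖ (W * N * Wᴴ)) * ρ').trace
        = (((1 : Matrix S S ℂ) ⊗ₖ N) * ρ).trace := by
    intro N
    rw [trace_eq_trace_ptraceR, trace_eq_trace_ptraceR, keyPt']
  have hpt : ptraceR ρ' = ptraceR ρ := by
    have := ptraceR_sandwich (S := S) ρ W Wᴴ
    rw [hρ', hkW, this, h1, Matrix.one_kronecker_one, Matrix.one_mul]
  unfold classC
  rw [hpt]
  congr 1
  apply congrArg
  apply Set.ext
  intro e
  constructor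
  · rintro ⟨m, M, hP, hs, rfl⟩
    refine ⟨m, fun x => Wᴴ * M x * W, fun x => (hP x).conjTranspose_mul_mul_same W, ?_, ?_⟩
    · rw [← Finset.sum_mul, ← Finset.mul_sum, hs, Matrix.mul_one, h1]
    · exact Finset.sum_congr rfl fun x _ => by rw [keyTr, keyPt]
  · rintro ⟨m, M, hP, hs, rfl⟩
    refine ⟨m, fun x => W * M x * Wᴴ, fun x => (hP x).mul_mul_conjTranspose_same W, ?_, ?_⟩
    · rw [← Finset.sum_mul, ← Finset.mul_sum, hs, Matrix.mul_one, h2]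
    · exact (Finset.sum_congr rfl fun x _ => by rw [keyTr', keyPt']).symm

lemma sum_rot {α β γ : Type*} [Fintype α] [Fintype β] [Fintype γ] (f : α → β → γ → ℂ) :
    ∑ r : α, ∑ b : β, ∑ c : γ, f r b c = ∑ c : γ, ∑ b : β, ∑ r : α, f r b c :=
  calc ∑ r : α, ∑ b : β, ∑ c : γ, f r b c
      = ∑ b : β, ∑ r : α, ∑ c : γ, f r b c := Finset.sum_comm
    _ = ∑ b : β, ∑ c : γ, ∑ r : α, f r b c := Finset.sum_congr rfl fun b _ => Finset.sum_comm
    _ = ∑ c : γ, ∑ b : β, ∑ r : α, f r b c := Finset.sum_comm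

/-- Classical correlations are independent of the purification:
if two unit vectors `ψ, φ ∈ ℂ^{S×R×A}` satisfy `tr_A |ψ⟩⟨ψ| = tr_A |φ⟩⟨φ|`, then
`C^(d)_{S|A}(tr_R |ψ⟩⟨ψ|) = C^(d)_{S|A}(tr_R |φ⟩⟨φ|)` for `1 ≤ d ≤ |S|`. -/
theorem stmt7 {S R A : Type*} [Fintype S] [Fintype R] [Fintype A]
    [DecidableEq S] [DecidableEq R] [DecidableEq A]
    [Nonempty S] [Nonempty R] [Nonempty A]
    (ψ φ : S × R × A → ℂ) (hψ : star ψ ⬝ᵥ ψ = 1) (hφ : star φ ⬝ᵥ φ = 1)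
    (h : ptrace3 (outer ψ) = ptrace3 (outer φ))
    (d : ℕ) (hd1 : 1 ≤ d) (hdn : d ≤ Fintype.card S) :
    classC d (ptrace2 (outer ψ)) = classC d (ptrace2 (outer φ)) := by
  classical
  let Ψm : Matrix (S × R) A ℂ := fun p a => ψ (p.1, p.2, a)
  let Φm : Matrix (S × R) A ℂ := fun p a => φ (p.1, p.2, a)
  have hgram : Ψm * Ψmᴴ = Φm * Φmᴴ := by
    funext p q
    have := congrFun (congrFun h p) q
    simp only [Matrix.mul_apply, Matrix.conjTranspose_apply]
    simpa [ptrace3, outer, Matrix.mul_apply, Matrix.conjTranspose_apply, Ψm, Φm] using this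
  obtain ⟨U, hU1, hU2, hU3⟩ := exists_unitary_of_gram Ψm Φm hgram
  have hφ' : ∀ s r a, φ (s, r, a) = ∑ b, ψ (s, r, b) * U b a := by
    intro s r a
    have := congrFun (congrFun hU3 (s, r)) a
    rw [Matrix.mul_apply] at this
    simpa [Φm, Ψm, Matrix.mul_apply] using this
  set Wt : Matrix A A ℂ := Uᵀ with hWt
  have hWtH : Wtᴴ = Uᴴᵀ := by
    funext a b
    simp [hWt, Matrix.conjTranspose_apply, Matrix.transpose_apply]
  have hW1 : Wtᴴ * Wt = 1 := by
    rw [hWtH, hWt, ← Matrix.transpose_mul, hU2, Matrix.transpose_one]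
  have hW2 : Wt * Wtᴴ = 1 := by
    rw [hWtH, hWt, ← Matrix.transpose_mul, hU1, Matrix.transpose_one]
  have hconj : ptrace2 (outer φ)
      = ((1 : Matrix S S ℂ) ⊗ₖ Wt) * ptrace2 (outer ψ) * ((1 : Matrix S S ℂ) ⊗ₖ Wt)ᴴ := by
    rw [one_kron_conjTranspose]
    funext p q
    cases p with | mk s a => cases q with | mk s' a' =>
    rw [mul_kron_apply]
    simp only [kron_mul_apply]
    have lhs : (ptrace2 (outer φ)) (s, a) (s', a')
        = ∑ r, (∑ b, ψ (s, r, b) * U b a) * ∑ c, star (ψ (s', r, c)) * star (U c a') := by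
      refine Finset.sum_congr rfl fun r _ => ?_
      show φ (s, r, a) * star (φ (s', r, a')) = _
      rw [hφ' s r a, hφ' s' r a']
      congr 1
      rw [star_sum]
      exact Finset.sum_congr rfl fun c _ => star_mul' _ _
    rw [lhs]
    have rhs : ∀ c, (∑ b, Wt a b * (ptrace2 (outer ψ)) (s, b) (s', c)) * Wtᴴ c a'
        = ∑ b, ∑ r, U b a * (ψ (s, r, b) * star (ψ (s', r, c))) * star (U c a') := by
      intro c
      rw [Finset.sum_mul]
      refine Finset.sum_congr rfl fun b _ => ?_
      show Wt a b * (∑ r, ψ (s, r, b) * star (ψ (s', r, c))) * Wtᴴ c a' = _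
      rw [Finset.mul_sum, Finset.sum_mul]
      refine Finset.sum_congr rfl fun r _ => ?_
      simp only [hWt, Matrix.conjTranspose_apply, Matrix.transpose_apply]
    simp only [rhs]
    simp only [Finset.sum_mul_sum]
    rw [sum_rot]
    refine Finset.sum_congr rfl fun c _ => Finset.sum_congr rfl fun b _ =>
      Finset.sum_congr rfl fun r _ => by ring
  rw [hconj, classC_conj d (ptrace2 (outer ψ)) Wt hW1 hW2]
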